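/- Let M ∈ ℝ_{≥0}^{R1×R2}, ε > 0, and fix μ ∈ P_{R1} with strictly positive entries. Let ν ∈ P_{R2} have strictly positive entries and let (α*, β*) be any maximizer of the dual objective αᵀμ + βᵀν − ε Σ_{m,n} exp((α_m + β_n − M_{mn})/ε). Then β* is a subgradient of the convex function ν' ↦ S_ε(μ,ν') at ν: for every ν' ∈ P_{R2}, S_ε(μ,ν') ≥ S_ε(μ,ν) + ⟨β*, ν' − ν⟩. -/

import Mathlib

noncomputable section

open Finset

/-- The probability simplex in `ℝ^R`. -/
def probSimplex (R : ℕ) : Set (Fin R → ℝ) :=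
  {p | (∀ r, 0 ≤ p r) ∧ ∑ r, p r = 1}

/-- The transport polytope `Π(μ, ν)`. -/
def transportPolytope {R1 R2 : ℕ} (μ : Fin R1 → ℝ) (ν : Fin R2 → ℝ) :
    Set (Matrix (Fin R1) (Fin R2) ℝ) :=
  {T | (∀ m n, 0 ≤ T m n) ∧ (∀ m, ∑ n, T m n = μ m) ∧ (∀ n, ∑ m, T m n = ν n)}

/-- The entropy `H(T) = -∑ T_{mn} (log T_{mn} - 1)` (with `0 log 0 = 0`). -/
def entropyH {R1 R2 : ℕ} (T : Matrix (Fin R1) (Fin R2) ℝ) : ℝ :=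
  -∑ m, ∑ n, T m n * (Real.log (T m n) - 1)

/-- The entropy-regularized transport objective `⟨T, M⟩ - ε H(T)`. -/
def otObj {R1 R2 : ℕ} (M : Matrix (Fin R1) (Fin R2) ℝ) (ε : ℝ)
    (T : Matrix (Fin R1) (Fin R2) ℝ) : ℝ :=
  (∑ m, ∑ n, T m n * M m n) - ε * entropyH T

/-- The Sinkhorn distance `S_ε(μ, ν) = min_{T ∈ Π(μ,ν)} ⟨T, M⟩ - ε H(T)`. -/
def sinkhornDist {R1 R2 : ℕ} (M : Matrix (Fin R1) (Fin R2) ℝ) (ε : ℝ)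
    (μ : Fin R1 → ℝ) (ν : Fin R2 → ℝ) : ℝ :=
  sInf {c | ∃ T ∈ transportPolytope μ ν, c = otObj M ε T}

/-- The dual objective `αᵀμ + βᵀν - ε ∑_{m,n} exp((α_m + β_n - M_{mn})/ε)`. -/
def dualObj {R1 R2 : ℕ} (M : Matrix (Fin R1) (Fin R2) ℝ) (ε : ℝ)
    (μ : Fin R1 → ℝ) (ν : Fin R2 → ℝ) (α : Fin R1 → ℝ) (β : Fin R2 → ℝ) : ℝ :=
  (∑ m, α m * μ m) + (∑ n, β n * ν n)
    - ε * ∑ m, ∑ n, Real.exp ((α m + β n - M m n) / ε)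


lemma pointwise_ineq {ε c x : ℝ} (hε : 0 < ε) (hx : 0 ≤ x) :
    c * x + ε * x - ε * (x * Real.log x) ≤ ε * Real.exp (c / ε) := by
  rcases eq_or_lt_of_le hx with h | h
  · rw [← h]; simp; positivity
  · have key : c / ε - Real.log x + 1 ≤ Real.exp (c / ε - Real.log x) :=
      Real.add_one_le_exp _
    have hx' : Real.exp (c / ε - Real.log x) * x = Real.exp (c / ε) := by
      rw [Real.exp_sub, Real.exp_log h]; field_simp
    have h2 := mul_le_mul_of_nonneg_right key h.le
    rw [hx'] at h2
    have h3 := mul_le_mul_of_nonneg_left h2 hε.le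
    have hc : ε * ((c / ε - Real.log x + 1) * x) = c * x + ε * x - ε * (x * Real.log x) := by
      field_simp; ring
    linarith [hc ▸ h3]

lemma grad_zero {ε K a : ℝ} (hε : 0 < ε)
    (h : ∀ t : ℝ, t * a - ε * (Real.exp (t / ε) - 1) * K ≤ 0) : a = K := by
  set f : ℝ → ℝ := fun t => t * a - ε * (Real.exp (t / ε) - 1) * K with hf
  have hmax : IsLocalMax f 0 := by
    apply Filter.Eventually.of_forall
    intro x
    have h0 : f 0 = 0 := by simp [hf]
    rw [h0]; exact h x
  have h1 : HasDerivAt (fun t : ℝ => t * a) a 0 := by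
    simpa using (hasDerivAt_id (0:ℝ)).mul_const a
  have h2 : HasDerivAt (fun t : ℝ => t / ε) (1 / ε) 0 := by
    simpa using (hasDerivAt_id (0:ℝ)).div_const ε
  have h3 : HasDerivAt (fun t : ℝ => Real.exp (t / ε)) (1 / ε) 0 := by
    have := h2.exp
    simpa using this
  have h4 : HasDerivAt (fun t : ℝ => ε * (Real.exp (t / ε) - 1) * K) K 0 := by
    have := ((h3.sub_const 1).const_mul ε).mul_const K
    have he : ε * (1 / ε) * K = K := by field_simp
    rw [he] at this
    exact this
  have hf' : HasDerivAt f (a - K) 0 := h1.sub h4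
  have := hmax.deriv_eq_zero
  rw [hf'.deriv] at this
  linarith

lemma weak_duality {R1 R2 : ℕ} (M : Matrix (Fin R1) (Fin R2) ℝ) {ε : ℝ} (hε : 0 < ε)
    (μ' : Fin R1 → ℝ) (ν' : Fin R2 → ℝ) (α : Fin R1 → ℝ) (β : Fin R2 → ℝ)
    {T : Matrix (Fin R1) (Fin R2) ℝ} (hT : T ∈ transportPolytope μ' ν') :
    dualObj M ε μ' ν' α β ≤ otObj M ε T := by
  obtain ⟨hT0, hTr, hTc⟩ := hT
  have hα : ∑ m, α m * μ' m = ∑ m, ∑ n, α m * T m n := by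
    refine Finset.sum_congr rfl fun m _ => ?_
    rw [← hTr m, Finset.mul_sum]
  have hβ : ∑ n, β n * ν' n = ∑ m, ∑ n, β n * T m n := by
    rw [Finset.sum_comm]
    refine Finset.sum_congr rfl fun n _ => ?_
    rw [← hTc n, Finset.mul_sum]
  have dual_eq : dualObj M ε μ' ν' α β
      = ∑ m, ∑ n, (α m * T m n + β n * T m n - ε * Real.exp ((α m + β n - M m n) / ε)) := by
    unfold dualObj
    rw [hα, hβ]
    simp only [Finset.sum_add_distrib, Finset.sum_sub_distrib, Finset.mul_sum]
  have ot_eq : otObj M ε T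
      = ∑ m, ∑ n, (T m n * M m n + ε * (T m n * (Real.log (T m n) - 1))) := by
    unfold otObj entropyH
    rw [mul_neg, sub_neg_eq_add]
    simp only [Finset.sum_add_distrib, Finset.mul_sum]
  rw [dual_eq, ot_eq]
  refine Finset.sum_le_sum fun m _ => Finset.sum_le_sum fun n _ => ?_
  have := pointwise_ineq (ε := ε) (c := α m + β n - M m n) (x := T m n) hε (hT0 m n)
  nlinarith [this]

/-- If `(α*, β*)` maximizes the dual objective at `ν`, then `β*` is a subgradient
of `ν' ↦ S_ε(μ, ν')` at `ν`: for every `ν'` in the simplex,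
`S_ε(μ, ν') ≥ S_ε(μ, ν) + ⟨β*, ν' - ν⟩`. -/
theorem dual_optimal_is_subgradient {R1 R2 : ℕ}
    (M : Matrix (Fin R1) (Fin R2) ℝ) (hM : ∀ m n, 0 ≤ M m n)
    (ε : ℝ) (hε : 0 < ε)
    (μ : Fin R1 → ℝ) (hμ : μ ∈ probSimplex R1) (hμpos : ∀ m, 0 < μ m)
    (ν : Fin R2 → ℝ) (hν : ν ∈ probSimplex R2) (hνpos : ∀ n, 0 < ν n)
    (αs : Fin R1 → ℝ) (βs : Fin R2 → ℝ)
    (hmax : ∀ (α : Fin R1 → ℝ) (β : Fin R2 → ℝ),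
      dualObj M ε μ ν α β ≤ dualObj M ε μ ν αs βs) :
    ∀ ν' ∈ probSimplex R2,
      sinkhornDist M ε μ ν + ∑ n, βs n * (ν' n - ν n) ≤ sinkhornDist M ε μ ν' := by
  intro ν' hν'
  set E : Matrix (Fin R1) (Fin R2) ℝ := fun m n => Real.exp ((αs m + βs n - M m n) / ε)
    with hEdef
  -- first-order condition in α
  have h1 : ∀ m, μ m = ∑ n, E m n := by
    intro m
    apply grad_zero hε
    intro t
    have hkey : dualObj M ε μ ν (fun m' => αs m' + if m' = m then t else 0) βs
        = dualObj M ε μ ν αs βs + (t * μ m - ε * (Real.exp (t / ε) - 1) * ∑ n, E m n) := by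
      unfold dualObj
      have hs1 : ∑ m', (αs m' + if m' = m then t else 0) * μ m'
          = (∑ m', αs m' * μ m') + t * μ m := by
        simp only [add_mul, ite_mul, zero_mul, Finset.sum_add_distrib]
        rw [Finset.sum_ite_eq' univ m (fun m' => t * μ m')]
        simp
      have hs2 : ∑ m', ∑ n, Real.exp (((αs m' + if m' = m then t else 0) + βs n - M m' n) / ε)
          = (∑ m', ∑ n, E m' n) + (Real.exp (t / ε) - 1) * ∑ n, E m n := by
        have hterm : ∀ m' n, Real.exp (((αs m' + if m' = m then t else 0) + βs n - M m' n) / ε)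
            = E m' n + (if m' = m then (Real.exp (t / ε) - 1) * E m n else 0) := by
          intro m' n
          by_cases hm : m' = m
          · subst hm
            simp only [eq_self_iff_true, if_true, hEdef]
            rw [show (αs m' + t + βs n - M m' n) / ε
                = t / ε + (αs m' + βs n - M m' n) / ε by ring, Real.exp_add]
            ring
          · simp [hm, hEdef]
        simp_rw [hterm, Finset.sum_add_distrib]
        congr 1
        rw [Finset.sum_comm]
        simp_rw [Finset.sum_ite_eq' univ m]
        simp [Finset.mul_sum]
      rw [hs1, hs2]; ring
    have := hmax (fun m' => αs m' + if m' = m then t else 0) βs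
    rw [hkey] at this
    linarith
  -- first-order condition in β
  have h2 : ∀ n, ν n = ∑ m, E m n := by
    intro n
    apply grad_zero hε
    intro t
    have hkey : dualObj M ε μ ν αs (fun n' => βs n' + if n' = n then t else 0)
        = dualObj M ε μ ν αs βs + (t * ν n - ε * (Real.exp (t / ε) - 1) * ∑ m, E m n) := by
      unfold dualObj
      have hs1 : ∑ n', (βs n' + if n' = n then t else 0) * ν n'
          = (∑ n', βs n' * ν n') + t * ν n := by
        simp only [add_mul, ite_mul, zero_mul, Finset.sum_add_distrib]
        rw [Finset.sum_ite_eq' univ n (fun n' => t * ν n')]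
        simp
      have hs2 : ∑ m, ∑ n', Real.exp ((αs m + (βs n' + if n' = n then t else 0) - M m n') / ε)
          = (∑ m, ∑ n', E m n') + (Real.exp (t / ε) - 1) * ∑ m, E m n := by
        have hterm : ∀ m n', Real.exp ((αs m + (βs n' + if n' = n then t else 0) - M m n') / ε)
            = E m n' + (if n' = n then (Real.exp (t / ε) - 1) * E m n else 0) := by
          intro m n'
          by_cases hn : n' = n
          · subst hn
            simp only [eq_self_iff_true, if_true, hEdef]
            rw [show (αs m + (βs n' + t) - M m n') / ε
                = t / ε + (αs m + βs n' - M m n') / ε by ring, Real.exp_add]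
            ring
          · simp [hn, hEdef]
        simp_rw [hterm, Finset.sum_add_distrib]
        congr 1
        simp_rw [Finset.sum_ite_eq' univ n]
        simp [Finset.mul_sum, Finset.sum_comm (γ := ℝ)]
      rw [hs1, hs2]; ring
    have := hmax αs (fun n' => βs n' + if n' = n then t else 0)
    rw [hkey] at this
    linarith
  -- E is feasible
  have hE_mem : E ∈ transportPolytope μ ν :=
    ⟨fun m n => (Real.exp_pos _).le, fun m => (h1 m).symm, fun n => (h2 n).symm⟩
  -- strong duality: otObj E = dualObj αs βs
  have hEobj : otObj M ε E = dualObj M ε μ ν αs βs := by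
    have hterm : ∀ m n, E m n * M m n + ε * (E m n * (Real.log (E m n) - 1))
        = αs m * E m n + βs n * E m n - ε * E m n := by
      intro m n
      simp only [hEdef]
      rw [Real.log_exp]
      field_simp
      ring
    have lhs_eq : otObj M ε E
        = ∑ m, ∑ n, (αs m * E m n + βs n * E m n - ε * E m n) := by
      unfold otObj entropyH
      rw [mul_neg, sub_neg_eq_add]
      simp only [Finset.mul_sum, ← Finset.sum_add_distrib]
      simp_rw [hterm]
    rw [lhs_eq]
    unfold dualObj
    simp only [Finset.sum_sub_distrib, Finset.sum_add_distrib]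
    have e1 : ∑ m, ∑ n, αs m * E m n = ∑ m, αs m * μ m := by
      refine Finset.sum_congr rfl fun m _ => ?_
      rw [h1 m, Finset.mul_sum]
    have e2 : ∑ m, ∑ n, βs n * E m n = ∑ n, βs n * ν n := by
      rw [Finset.sum_comm]
      refine Finset.sum_congr rfl fun n _ => ?_
      rw [h2 n, Finset.mul_sum]
    have e3 : ∑ m, ∑ n, ε * E m n = ε * ∑ m, ∑ n, E m n := by
      simp [Finset.mul_sum]
    rw [e1, e2, e3]
  -- nonemptiness of Π(μ,ν')
  have hT' : (fun m n => μ m * ν' n) ∈ transportPolytope μ ν' := by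
    refine ⟨fun m n => mul_nonneg (hμpos m).le (hν'.1 n), fun m => ?_, fun n => ?_⟩
    · rw [← Finset.mul_sum, hν'.2, mul_one]
    · rw [← Finset.sum_mul, hμ.2, one_mul]
  have hne : {c | ∃ T ∈ transportPolytope μ ν', c = otObj M ε T}.Nonempty :=
    ⟨otObj M ε (fun m n => μ m * ν' n), ⟨_, hT', rfl⟩⟩
  have hlow : dualObj M ε μ ν' αs βs ≤ sinkhornDist M ε μ ν' := by
    apply le_csInf hne
    rintro c ⟨T, hT, rfl⟩
    exact weak_duality M hε μ ν' αs βs hT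
  have hbdd : BddBelow {c | ∃ T ∈ transportPolytope μ ν, c = otObj M ε T} := by
    refine ⟨dualObj M ε μ ν αs βs, ?_⟩
    rintro c ⟨T, hT, rfl⟩
    exact weak_duality M hε μ ν αs βs hT
  have hup : sinkhornDist M ε μ ν ≤ dualObj M ε μ ν αs βs := by
    rw [← hEobj]
    exact csInf_le hbdd ⟨E, hE_mem, rfl⟩
  have hshift : dualObj M ε μ ν' αs βs
      = dualObj M ε μ ν αs βs + ∑ n, βs n * (ν' n - ν n) := by
    unfold dualObj
    simp only [mul_sub, Finset.sum_sub_distrib]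
    ring_nf
    simp only [mul_comm ε⁻¹]
  linarith
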